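/- If a bitopological space X is ij-semiregular and every cover of X by ij-regular open sets admits a countable subfamily with τ_j-dense union, then X is ij-weakly Lindelöf. -/

import Mathlib

open Set Topology

universe u

variable {X : Type u}

/-- `X` with topologies `t1`, `t2` is ij-weakly Lindelöf: every `t1`-open cover admits a
countable subfamily whose union is `t2`-dense. -/
def IjWeaklyLindelof (t1 t2 : TopologicalSpace X) : Prop :=
  ∀ {ι : Type u} (U : ι → Set X), (∀ a, IsOpen[t1] (U a)) → (⋃ a, U a) = Set.univ →
    ∃ s : Set ι, s.Countable ∧ @closure X t2 (⋃ a ∈ s, U a) = Set.univ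

/-- `S` is ij-regular open: `S = i-int(j-cl(S))`. -/
def IjRegularOpen (t1 t2 : TopologicalSpace X) (S : Set X) : Prop :=
  @interior X t1 (@closure X t2 S) = S

/-- `S` is ij-regular closed: `S = i-cl(j-int(S))`. -/
def IjRegularClosed (t1 t2 : TopologicalSpace X) (S : Set X) : Prop :=
  @closure X t1 (@interior X t2 S) = S

/-- `X` is ij-semiregular (pointwise form). -/
def IjSemiregular (t1 t2 : TopologicalSpace X) : Prop :=
  ∀ x : X, ∀ V : Set X, IsOpen[t1] V → x ∈ V →
    ∃ U : Set X, IsOpen[t1] U ∧ x ∈ U ∧ U ⊆ @interior X t1 (@closure X t2 U) ∧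
      @interior X t1 (@closure X t2 U) ⊆ V

lemma ijRegularOpen_int_cl (t1 t2 : TopologicalSpace X) (S : Set X) :
    IjRegularOpen t1 t2 (@interior X t1 (@closure X t2 S)) := by
  unfold IjRegularOpen
  apply subset_antisymm
  · have h0 : @interior X t1 (@closure X t2 S) ⊆ @closure X t2 S := @interior_subset X t1 _
    have h1 : @closure X t2 (@interior X t1 (@closure X t2 S)) ⊆ @closure X t2 S :=
      Set.Subset.trans (@closure_mono X t2 _ _ h0) (le_of_eq (@closure_closure X t2 S))
    exact @interior_mono X t1 _ _ h1
  · exact @interior_maximal X t1 _ _ (@subset_closure X t2 _) (@isOpen_interior X t1 _)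

theorem stmt4 (t1 t2 : TopologicalSpace X) (hsr : IjSemiregular t1 t2)
    (h : ∀ {ι : Type u} (U : ι → Set X), (∀ a, IjRegularOpen t1 t2 (U a)) →
        (⋃ a, U a) = Set.univ →
        ∃ s : Set ι, s.Countable ∧ @closure X t2 (⋃ a ∈ s, U a) = Set.univ) :
    IjWeaklyLindelof t1 t2 := by
  intro ι U hUopen hUcov
  -- choose for each x an index with x ∈ U (a x)
  have hmem : ∀ x : X, ∃ a, x ∈ U a := by
    intro x
    have : x ∈ ⋃ a, U a := hUcov ▸ mem_univ x
    simpa using this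
  choose a ha using hmem
  -- semiregularity gives V x
  have hV : ∀ x : X, ∃ V : Set X, IsOpen[t1] V ∧ x ∈ V ∧
      V ⊆ @interior X t1 (@closure X t2 V) ∧
      @interior X t1 (@closure X t2 V) ⊆ U (a x) :=
    fun x => hsr x (U (a x)) (hUopen (a x)) (ha x)
  choose V hVopen hxV hVsub hVsub2 using hV
  set W : X → Set X := fun x => @interior X t1 (@closure X t2 (V x)) with hW
  have hWreg : ∀ x, IjRegularOpen t1 t2 (W x) := fun x => ijRegularOpen_int_cl t1 t2 (V x)
  have hWcov : (⋃ x, W x) = Set.univ := by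
    apply eq_univ_of_forall
    intro x
    exact mem_iUnion.2 ⟨x, hVsub x (hxV x)⟩
  obtain ⟨s, hs, hdense⟩ := h W hWreg hWcov
  refine ⟨a '' s, hs.image a, ?_⟩
  apply eq_univ_of_univ_subset
  rw [← hdense]
  apply @closure_mono X t2 _ _
  intro y hy
  obtain ⟨x, hx, hyW⟩ := by simpa using hy
  exact mem_biUnion (mem_image_of_mem a hx) (hVsub2 x hyW)
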